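/- Suppose R > 0 and for i = 1,...,n−1 we have λv(p_{i-1} − p_{i-1}q_{i-1} + p_i q_i) − λc_i ≥ R, and λv(p_{n-1} − p_{n-1}q_{n-1} + p_0 q_0) − λc_n ≥ R, with ∑_{i=0}^{n-1} p_i = 1 and q_i ∈ [0,1]. Then ∑_{i=1}^n λc_i ≤ λv − n·R. -/

import Mathlib

/-- The epigraph constraints of the dispatching LP imply
    `∑ λc_i ≤ λv − n·R`. -/
theorem epigraph_constraints_bound
    (n : ℕ) (hn : 2 ≤ n)
    (lamv R : ℝ) (hlamv : 0 < lamv) (hR : 0 < R)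
    (p q lamc : ℕ → ℝ)
    (hp : ∀ i < n, 0 ≤ p i ∧ p i ≤ 1)
    (hq : ∀ i < n, 0 ≤ q i ∧ q i ≤ 1)
    (hlamc : ∀ i ∈ Finset.Icc 1 n, 0 ≤ lamc i)
    (hpsum : ∑ i ∈ Finset.range n, p i = 1)
    (hcon : ∀ i ∈ Finset.Icc 1 (n - 1),
      lamv * (p (i - 1) - p (i - 1) * q (i - 1) + p i * q i) - lamc i ≥ R)
    (hconn : lamv * (p (n - 1) - p (n - 1) * q (n - 1) + p 0 * q 0) - lamc n ≥ R) :
    ∑ i ∈ Finset.Icc 1 n, lamc i ≤ lamv - n * R := by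
  -- telescoping sum identity
  have hS : (∑ i ∈ Finset.Icc 1 (n-1), (p (i-1) - p (i-1) * q (i-1) + p i * q i))
      + (p (n-1) - p (n-1) * q (n-1) + p 0 * q 0) = 1 := by
    have h1 : (∑ i ∈ Finset.Icc 1 (n-1), (p (i-1) - p (i-1) * q (i-1) + p i * q i))
        = ∑ j ∈ Finset.range (n-1), (p j - p j * q j + p (j+1) * q (j+1)) := by
      rw [← Finset.Ico_add_one_right_eq_Icc, show n-1+1 = n by omega, Finset.sum_Ico_eq_sum_range]
      apply Finset.sum_congr rfl
      intro j _
      have : 1 + j - 1 = j := by omega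
      rw [this, Nat.add_comm 1 j]
    rw [h1]
    have h2 : ∀ j, (p j - p j * q j + p (j+1) * q (j+1))
        = p j + ((fun i => p i * q i) (j+1) - (fun i => p i * q i) j) := by
      intro j; ring
    simp only [h2]
    rw [Finset.sum_add_distrib, Finset.sum_range_sub (fun i => p i * q i)]
    have h3 : ∑ j ∈ Finset.range (n-1), p j + p (n-1) = 1 := by
      rw [← Finset.sum_range_succ]
      have : n - 1 + 1 = n := by omega
      rw [this, hpsum]
    linarith
  -- sum the constraints
  have hkey : ∑ i ∈ Finset.Icc 1 (n-1), lamc i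
      ≤ lamv * (∑ i ∈ Finset.Icc 1 (n-1), (p (i-1) - p (i-1) * q (i-1) + p i * q i))
        - (n-1 : ℕ) * R := by
    have hb : ∀ i ∈ Finset.Icc 1 (n-1), lamc i
        ≤ lamv * (p (i-1) - p (i-1) * q (i-1) + p i * q i) - R := by
      intro i hi; have := hcon i hi; linarith
    calc ∑ i ∈ Finset.Icc 1 (n-1), lamc i
        ≤ ∑ i ∈ Finset.Icc 1 (n-1),
            (lamv * (p (i-1) - p (i-1) * q (i-1) + p i * q i) - R) :=
          Finset.sum_le_sum hb
      _ = lamv * (∑ i ∈ Finset.Icc 1 (n-1), (p (i-1) - p (i-1) * q (i-1) + p i * q i))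
            - (n-1 : ℕ) * R := by
          rw [Finset.sum_sub_distrib, Finset.mul_sum, Finset.sum_const,
            Nat.card_Icc]
          simp
  have hsplit : ∑ i ∈ Finset.Icc 1 n, lamc i
      = ∑ i ∈ Finset.Icc 1 (n-1), lamc i + lamc n := by
    have h := Finset.sum_Icc_succ_top (a := 1) (b := n-1) (by omega) lamc
    rw [show n-1+1 = n by omega] at h
    exact h
  have hcast : ((n - 1 : ℕ) : ℝ) = (n : ℝ) - 1 := by
    have : (1:ℕ) ≤ n := by omega
    push_cast [Nat.cast_sub this]; ring
  rw [hsplit]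
  have hlast : lamc n ≤ lamv * (p (n-1) - p (n-1) * q (n-1) + p 0 * q 0) - R := by
    linarith
  nlinarith [hkey, hlast, hS, hcast]
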